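/- Let G be a graph and T the set of PSD forcing trees induced by some relaxed chronology of PSD forces for a PSD forcing set of size k. Then for every vertex v ∈ V(G), there exists a PSD forcing set B of size k containing v and a relaxed chronology of PSD forces for B whose induced forcing trees are exactly T. -/

import Mathlib

namespace ZF

variable {V : Type*} [Fintype V] [DecidableEq V]

/-- A valid standard zero forcing force within the vertex set `U`, given blue set `B`:
`u` is blue, `v` is its unique white neighbor in `U`. -/
def ZFValid (G : SimpleGraph V) (U B : Set V) (u v : V) : Prop :=
  u ∈ U ∧ v ∈ U ∧ u ∈ B ∧ v ∉ B ∧ G.Adj u v ∧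
    ∀ w ∈ U, G.Adj u w → w ∉ B → w = v

/-- `whiteConn G U B a b` : `a` and `b` are joined by a walk through white
(non-blue) vertices of `U` (possibly trivial). -/
def whiteConn (G : SimpleGraph V) (U B : Set V) : V → V → Prop :=
  Relation.ReflTransGen (fun a b => G.Adj a b ∧ a ∈ U ∧ b ∈ U ∧ a ∉ B ∧ b ∉ B)

/-- A valid PSD force within the vertex set `U`, given blue set `B`:
`u` is blue and `v` is the unique neighbor of `u` in the component of the
white subgraph containing `v`. -/
def PSDValid (G : SimpleGraph V) (U B : Set V) (u v : V) : Prop :=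
  u ∈ U ∧ v ∈ U ∧ u ∈ B ∧ v ∉ B ∧ G.Adj u v ∧
    ∀ w ∈ U, G.Adj u w → w ∉ B → whiteConn G U B v w → w = v

/-- One propagation step for a generic color change rule `valid`. -/
def step (valid : Set V → V → V → Prop) (B : Set V) : Set V :=
  B ∪ {v | ∃ u, valid B u v}

/-- Iterated propagation. -/
def iter (valid : Set V → V → V → Prop) (B : Set V) : ℕ → Set V :=
  fun k => (step valid)^[k] B

/-- `B ⊆ U` is a forcing set of the induced subgraph on `U` for the rule `valid`. -/
def IsForcingSet (valid : Set V → V → V → Prop) (U B : Set V) : Prop :=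
  B ⊆ U ∧ ∃ k, U ⊆ iter valid B k

/-- Propagation time of the set `B` for rule `valid` on the induced subgraph on `U`. -/
noncomputable def propTime (valid : Set V → V → V → Prop) (U B : Set V) : ℕ :=
  sInf {k | U ⊆ iter valid B k}

/-- Vertices blue after `k` time-steps of the family of forces `F`, starting from `B`. -/
def expand (B : Set V) (F : ℕ → Set (V × V)) : ℕ → Set V
  | 0 => B
  | k + 1 => expand B F k ∪ {v | ∃ u, (u, v) ∈ F (k + 1)}

/-- A relaxed chronology of forces (for the rule `valid`) for the forcing set `B`
on the induced subgraph on `U`, with completion time `K`: at each time-step an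
arbitrary subset of the currently valid forces is performed (no vertex being
forced twice in one step), and all of `U` is blue after step `K`. -/
structure RelaxedChron (valid : Set V → V → V → Prop) (U B : Set V)
    (K : ℕ) (F : ℕ → Set (V × V)) : Prop where
  subset : B ⊆ U
  init : F 0 = ∅
  bound : ∀ k, K < k → F k = ∅
  forcesValid : ∀ k < K, ∀ u v, (u, v) ∈ F (k + 1) → valid (expand B F k) u v
  uniqueForcer : ∀ k u₁ u₂ v, (u₁, v) ∈ F k → (u₂, v) ∈ F k → u₁ = u₂
  complete : U ⊆ expand B F K

/-- The underlying set of forces of a relaxed chronology. -/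
def forcesOf (F : ℕ → Set (V × V)) (K : ℕ) : Set (V × V) :=
  {p | ∃ k, 1 ≤ k ∧ k ≤ K ∧ p ∈ F k}

/-- The terminus of a relaxed chronology: the vertices (of `U`) performing no force. -/
def terminus (U : Set V) (F : ℕ → Set (V × V)) (K : ℕ) : Set V :=
  {v ∈ U | ∀ u, (v, u) ∉ forcesOf F K}

/-- The reversal of a relaxed chronology: each force is reversed and
the order of the time-steps is reversed. -/
def revChron (F : ℕ → Set (V × V)) (K : ℕ) : ℕ → Set (V × V) :=
  fun k => if 1 ≤ k ∧ k ≤ K then {p | (p.2, p.1) ∈ F (K - k + 1)} else ∅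

/-- One round of performing all currently valid forces from the set of forces `S`. -/
def forceStep (valid : Set V → V → V → Prop) (S : Set (V × V)) (B : Set V) : Set V :=
  B ∪ {v | ∃ u, (u, v) ∈ S ∧ valid B u v}

def forceIter (valid : Set V → V → V → Prop) (S : Set (V × V)) (B : Set V) : ℕ → Set V :=
  fun t => (forceStep valid S)^[t] B

/-- Propagation time of a set of forces `S` for starting set `B` on `U`. -/
noncomputable def ptForces (valid : Set V → V → V → Prop) (U : Set V)
    (S : Set (V × V)) (B : Set V) : ℕ :=
  sInf {t | U ⊆ forceIter valid S B t}

/-- `v` is active at time-step `k` of the relaxed chronology `F`: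
it is blue after step `k` and has not yet performed a force. -/
def activeAt (B : Set V) (F : ℕ → Set (V × V)) (v : V) (k : ℕ) : Prop :=
  v ∈ expand B F k ∧ ∀ j ≤ k, ∀ u, (v, u) ∉ F j

/-- The zero forcing number. -/
noncomputable def Z (G : SimpleGraph V) : ℕ :=
  sInf {n | ∃ B : Set V, B.ncard = n ∧ IsForcingSet (ZFValid G Set.univ) Set.univ B}

/-- The PSD forcing number. -/
noncomputable def Zplus (G : SimpleGraph V) : ℕ :=
  sInf {n | ∃ B : Set V, B.ncard = n ∧ IsForcingSet (PSDValid G Set.univ) Set.univ B}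

/-- Standard `m`-propagation time `pt(G,m)`. -/
noncomputable def ptm (G : SimpleGraph V) (m : ℕ) : ℕ :=
  sInf {t | ∃ B : Set V, B.ncard = m ∧ IsForcingSet (ZFValid G Set.univ) Set.univ B ∧
    propTime (ZFValid G Set.univ) Set.univ B = t}

/-- PSD `m`-propagation time `pt₊(G,m)`. -/
noncomputable def ptplusm (G : SimpleGraph V) (m : ℕ) : ℕ :=
  sInf {t | ∃ B : Set V, B.ncard = m ∧ IsForcingSet (PSDValid G Set.univ) Set.univ B ∧
    propTime (PSDValid G Set.univ) Set.univ B = t}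

/-- Standard propagation time `pt(G)`. -/
noncomputable def pt (G : SimpleGraph V) : ℕ := ptm G (Z G)

/-- PSD propagation time `pt₊(G)`. -/
noncomputable def ptplus (G : SimpleGraph V) : ℕ := ptplusm G (Zplus G)

/-- PSD throttling number `thr₊(G)`. -/
noncomputable def thrplus (G : SimpleGraph V) : ℕ :=
  sInf {t | ∃ B : Set V, IsForcingSet (PSDValid G Set.univ) Set.univ B ∧
    t = B.ncard + propTime (PSDValid G Set.univ) Set.univ B}

/-- Closed neighborhood of a set. -/
def closedNbhd (G : SimpleGraph V) (B : Set V) : Set V :=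
  B ∪ {v | ∃ u ∈ B, G.Adj u v}

/-- Power domination process: the first step colors the closed neighborhood,
subsequent steps apply the standard zero forcing rule. -/
def pdIter (G : SimpleGraph V) (B : Set V) : ℕ → Set V
  | 0 => B
  | 1 => closedNbhd G B
  | (k + 2) => step (ZFValid G Set.univ) (pdIter G B (k + 1))

/-- `B` is a power dominating set. -/
def IsPDSet (G : SimpleGraph V) (B : Set V) : Prop :=
  ∃ k, Set.univ ⊆ pdIter G B k

/-- Power propagation time of a set. -/
noncomputable def pdPropTime (G : SimpleGraph V) (B : Set V) : ℕ :=
  sInf {k | Set.univ ⊆ pdIter G B k}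

/-- Power `m`-propagation time `ppt(G,m)`. -/
noncomputable def pptm (G : SimpleGraph V) (m : ℕ) : ℕ :=
  sInf {t | ∃ B : Set V, B.ncard = m ∧ IsPDSet G B ∧ pdPropTime G B = t}

/-- Restriction of a family of forces to those with both endpoints in `W`. -/
def restrictF (F : ℕ → Set (V × V)) (W : Set V) : ℕ → Set (V × V) :=
  fun k => {p ∈ F k | p.1 ∈ W ∧ p.2 ∈ W}

/-- The forcing tree of `b` : all vertices reachable from `b` by a chain of forces in `S`. -/
def treeOf (S : Set (V × V)) (b : V) : Set V :=
  {w | Relation.ReflTransGen (fun a c => (a, c) ∈ S) b w}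

open Classical in
/-- The endpoint, after `k` steps, of the path grown from `b ∈ B` in the
path bundle of the relaxed chronology `F` induced by the vertex `x`: the path is
extended by a force from its current endpoint into the component of white
vertices containing `x`, whenever such a force occurs. -/
noncomputable def lastVert (G : SimpleGraph V) (B : Set V) (F : ℕ → Set (V × V))
    (x : V) (b : V) : ℕ → V
  | 0 => b
  | k + 1 =>
    if h : ∃ w, (lastVert G B F x b k, w) ∈ F (k + 1) ∧ x ∉ expand B F k ∧
        whiteConn G Set.univ (expand B F k) x w
    then h.choose else lastVert G B F x b k

/-- The vertex set of the path bundle of `F` induced by `x`. -/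
def bundle (G : SimpleGraph V) (B : Set V) (F : ℕ → Set (V × V)) (x : V) (K : ℕ) : Set V :=
  {v | ∃ b ∈ B, ∃ j ≤ K, lastVert G B F x b j = v}

/-- The path of the bundle grown from `b`, as a list of vertices. -/
noncomputable def bundlePath (G : SimpleGraph V) (B : Set V) (F : ℕ → Set (V × V))
    (x : V) (K : ℕ) (b : V) : List V :=
  ((List.range (K + 1)).map (lastVert G B F x b)).dedup

/-- A nonempty path in `G`, given as a list of distinct consecutively adjacent vertices. -/
def IsPathList (G : SimpleGraph V) (l : List V) : Prop :=
  l ≠ [] ∧ l.Nodup ∧ l.Chain' G.Adj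

/-- `P` is an `(α,β)`-linkage: a collection of pairwise vertex-disjoint paths,
`α` consisting of one endpoint of each path and `β` of the other endpoints. -/
def IsLinkage (G : SimpleGraph V) (α β : Set V) (P : Set (List V)) : Prop :=
  (∀ l ∈ P, IsPathList G l) ∧
  (∀ l ∈ P, ∀ l' ∈ P, l ≠ l' → ∀ v, v ∈ l → v ∉ l') ∧
  (∀ l ∈ P, ∀ l' ∈ P, l.head? = l'.head? → l = l') ∧
  (∀ l ∈ P, ∀ l' ∈ P, l.getLast? = l'.getLast? → l = l') ∧
  α = {v | ∃ l ∈ P, l.head? = some v} ∧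
  β = {v | ∃ l ∈ P, l.getLast? = some v}

/-- `P` is a rigid linkage: for some `α`, `β` it is the unique `(α,β)`-linkage in `G`. -/
def IsRigidLinkage (G : SimpleGraph V) (P : Set (List V)) : Prop :=
  ∃ α β, IsLinkage G α β P ∧ ∀ P', IsLinkage G α β P' → P' = P

/-- A path cover of `G` : `m` vertex-disjoint induced paths covering all vertices,
the `i`-th path having vertices `vtx i 0, …, vtx i (n i − 1)` in path order. -/
structure IsPathCover (G : SimpleGraph V) (m : ℕ) (n : Fin m → ℕ)
    (vtx : (i : Fin m) → Fin (n i) → V) : Prop where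
  pos : ∀ i, 0 < n i
  inj : Function.Injective (fun p : (i : Fin m) × Fin (n i) => vtx p.1 p.2)
  cover : ∀ v : V, ∃ i j, vtx i j = v
  induced : ∀ i (j j' : Fin (n i)),
    G.Adj (vtx i j) (vtx i j') ↔ ((j : ℕ) + 1 = (j' : ℕ) ∨ (j' : ℕ) + 1 = (j : ℕ))

/-- A witness that a path cover is a parallel increasing path cover: a collection of
block partitions of `{0,…,K}`, one per path, compatible with the edges of `G`. -/
structure IsPIPWitness (G : SimpleGraph V) (m : ℕ) (n : Fin m → ℕ)
    (vtx : (i : Fin m) → Fin (n i) → V) (K : ℕ)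
    (A : (i : Fin m) → Fin (n i) → Finset ℕ) : Prop where
  mem : ∀ i j, A i j ⊆ Finset.range (K + 1)
  nonempty : ∀ i j, (A i j).Nonempty
  partition : ∀ i, ∀ x ∈ Finset.range (K + 1), ∃! j, x ∈ A i j
  mono : ∀ i (j j' : Fin (n i)), (j : ℕ) < (j' : ℕ) → ∀ x ∈ A i j, ∀ y ∈ A i j', x < y
  edge : ∀ (i i' : Fin m) j j', i ≠ i' →
    G.Adj (vtx i j) (vtx i' j') → ((A i j) ∩ (A i' j')).Nonempty

/-- A parallel increasing path cover of `G`. -/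
def IsPIP (G : SimpleGraph V) (m : ℕ) (n : Fin m → ℕ)
    (vtx : (i : Fin m) → Fin (n i) → V) : Prop :=
  IsPathCover G m n vtx ∧ ∃ K A, IsPIPWitness G m n vtx K A

/-- The path cover given by `vtx` is the chain set of the family of forces `F` :
the underlying forces are exactly the consecutive pairs along the paths. -/
def IsChainSetOf (m : ℕ) (n : Fin m → ℕ) (vtx : (i : Fin m) → Fin (n i) → V)
    (F : ℕ → Set (V × V)) (K : ℕ) : Prop :=
  ∀ u w, (u, w) ∈ forcesOf F K ↔
    ∃ (i : Fin m) (j : Fin (n i)) (j' : Fin (n i)),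
      u = vtx i j ∧ w = vtx i j' ∧ (j : ℕ) + 1 = (j' : ℕ)

end ZF

set_option linter.unusedSectionVars false
set_option maxHeartbeats 1000000

namespace ZF

variable {V : Type*} [Fintype V] [DecidableEq V]

variable {G : SimpleGraph V}

lemma whiteConn_mono {U B B' : Set V} (h : B ⊆ B') {a b : V}
    (hc : whiteConn G U B' a b) : whiteConn G U B a b :=
  Relation.ReflTransGen.mono
    (fun _ _ ⟨hadj, hxU, hyU, hx, hy⟩ =>
      ⟨hadj, hxU, hyU, fun hh => hx (h hh), fun hh => hy (h hh)⟩) _ _ hc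

lemma whiteConn_symm {U B : Set V} {a b : V} (hc : whiteConn G U B a b) :
    whiteConn G U B b a := by
  refine (@Relation.ReflTransGen.symmetric _ _ ⟨?_⟩).symm _ _ hc
  rintro x y ⟨hadj, hxU, hyU, hx, hy⟩
  exact ⟨hadj.symm, hyU, hxU, hy, hx⟩

lemma PSDValid_mono {B B' : Set V} {u w : V} (h : PSDValid G Set.univ B u w)
    (hBB : B ⊆ B') (hw : w ∉ B') : PSDValid G Set.univ B' u w := by
  obtain ⟨h1, h2, h3, h4, h5, h6⟩ := h
  exact ⟨h1, h2, hBB h3, hw, h5,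
    fun y hyU hadj hyB hconn => h6 y hyU hadj (fun hh => hyB (hBB hh)) (whiteConn_mono hBB hconn)⟩

lemma expand_eq (B : Set V) (F : ℕ → Set (V × V)) :
    ∀ m, expand B F m = B ∪ {w | ∃ u k, 1 ≤ k ∧ k ≤ m ∧ (u, w) ∈ F k} := by
  intro m
  induction m with
  | zero =>
    ext x; simp only [expand, Set.mem_union, Set.mem_setOf_eq]
    constructor
    · exact fun h => Or.inl h
    · rintro (h | ⟨u, k, h1, h2, _⟩)
      · exact h
      · omega
  | succ m ih =>
    ext x
    simp only [expand, ih, Set.mem_union, Set.mem_setOf_eq]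
    constructor
    · rintro ((h | ⟨u, k, h1, h2, h3⟩) | ⟨u, h⟩)
      · exact Or.inl h
      · exact Or.inr ⟨u, k, h1, by omega, h3⟩
      · exact Or.inr ⟨u, m + 1, by omega, le_refl _, h⟩
    · rintro (h | ⟨u, k, h1, h2, h3⟩)
      · exact Or.inl (Or.inl h)
      · rcases Nat.lt_or_ge k (m + 1) with hk | hk
        · exact Or.inl (Or.inr ⟨u, k, h1, by omega, h3⟩)
        · have : k = m + 1 := by omega
          exact Or.inr ⟨u, by rw [← this]; exact h3⟩

lemma expand_mono (B : Set V) (F : ℕ → Set (V × V)) {m m' : ℕ} (h : m ≤ m') :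
    expand B F m ⊆ expand B F m' := by
  rw [expand_eq, expand_eq]
  rintro x (hx | ⟨u, k, h1, h2, h3⟩)
  · exact Or.inl hx
  · exact Or.inr ⟨u, k, h1, by omega, h3⟩

lemma subset_expand (B : Set V) (F : ℕ → Set (V × V)) (m : ℕ) : B ⊆ expand B F m := by
  rw [expand_eq]; exact Set.subset_union_left

lemma iter_succ (valid : Set V → V → V → Prop) (B : Set V) (k : ℕ) :
    iter valid B (k + 1) = step valid (iter valid B k) := by
  simp only [iter, Function.iterate_succ_apply']

/-- A relaxed chronology for the PSD rule certifies a forcing set. -/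
lemma isForcingSet_of_relaxedChron {B : Set V} {K : ℕ} {F : ℕ → Set (V × V)}
    (hC : RelaxedChron (PSDValid G Set.univ) Set.univ B K F) :
    IsForcingSet (PSDValid G Set.univ) Set.univ B := by
  refine ⟨fun _ _ => trivial, K, ?_⟩
  have main : ∀ m, expand B F m ⊆ iter (PSDValid G Set.univ) B m := by
    intro m
    induction m with
    | zero => simp [iter, expand]
    | succ m ih =>
      rw [iter_succ]
      rintro x hx
      rcases (by exact hx : x ∈ expand B F m ∪ {v | ∃ u, (u, v) ∈ F (m + 1)}) with hx' | ⟨u, hu⟩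
      · exact Or.inl (ih hx')
      · rcases Nat.lt_or_ge m K with hm | hm
        · by_cases hxi : x ∈ iter (PSDValid G Set.univ) B m
          · exact Or.inl hxi
          · exact Or.inr ⟨u, PSDValid_mono (hC.forcesValid m hm u x hu) ih hxi⟩
        · have : F (m + 1) = ∅ := hC.bound _ (by omega)
          simp [this] at hu
  exact fun x _ => main K (hC.complete (by trivial))

end ZF

namespace ZF

variable {V : Type*} [Fintype V] [DecidableEq V] {G : SimpleGraph V}

/-- A serialization of a relaxed chronology: a sequence of single PSD forces. -/
structure SerialData (G : SimpleGraph V) (B : Set V) (S : Set (V × V)) where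
  n : ℕ
  t : ℕ → V × V
  valid : ∀ i < n, PSDValid G Set.univ (B ∪ {w | ∃ j, j < i ∧ (t j).2 = w}) (t i).1 (t i).2
  inj2 : ∀ i < n, ∀ j < n, (t i).2 = (t j).2 → i = j
  range_eq : S = {p | ∃ i, i < n ∧ t i = p}
  cover : ∀ x : V, x ∉ B → ∃ i, i < n ∧ (t i).2 = x

/-- The blue set before force `i` of a serialization. -/
def SerialData.D {B : Set V} {S : Set (V × V)} (sd : SerialData G B S) (i : ℕ) : Set V :=
  B ∪ {w | ∃ j, j < i ∧ (sd.t j).2 = w}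

lemma SerialData.D_mono {B : Set V} {S : Set (V × V)} (sd : SerialData G B S)
    {i j : ℕ} (h : i ≤ j) : sd.D i ⊆ sd.D j := by
  rintro x (hx | ⟨l, hl, he⟩)
  · exact Or.inl hx
  · exact Or.inr ⟨l, by omega, he⟩

lemma SerialData.validD {B : Set V} {S : Set (V × V)} (sd : SerialData G B S)
    {i : ℕ} (h : i < sd.n) : PSDValid G Set.univ (sd.D i) (sd.t i).1 (sd.t i).2 :=
  sd.valid i h

lemma SerialData.tgt_mem_D {B : Set V} {S : Set (V × V)} (sd : SerialData G B S)
    {j i : ℕ} (h : j < i) : (sd.t j).2 ∈ sd.D i := Or.inr ⟨j, h, rfl⟩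

lemma SerialData.tgt_not_mem_D {B : Set V} {S : Set (V × V)} (sd : SerialData G B S)
    {i : ℕ} (h : i < sd.n) : (sd.t i).2 ∉ sd.D i := (sd.validD h).2.2.2.1

lemma SerialData.tgt_not_mem_B {B : Set V} {S : Set (V × V)} (sd : SerialData G B S)
    {i : ℕ} (h : i < sd.n) : (sd.t i).2 ∉ B :=
  fun hmem => sd.tgt_not_mem_D h (Or.inl hmem)

lemma SerialData.src_mem_D {B : Set V} {S : Set (V × V)} (sd : SerialData G B S)
    {i : ℕ} (h : i < sd.n) : (sd.t i).1 ∈ sd.D i := (sd.validD h).2.2.1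

lemma SerialData.adj {B : Set V} {S : Set (V × V)} (sd : SerialData G B S)
    {i : ℕ} (h : i < sd.n) : G.Adj (sd.t i).1 (sd.t i).2 := (sd.validD h).2.2.2.2.1

/-- Serializing a relaxed chronology. -/
lemma exists_serialData [Nonempty V] {B : Set V} {K : ℕ} {F : ℕ → Set (V × V)}
    (hC : RelaxedChron (PSDValid G Set.univ) Set.univ B K F) :
    Nonempty (SerialData G B (forcesOf F K)) := by
  classical
  set S : Set (V × V) := forcesOf F K with hSdef
  -- the first step at which a force occurs
  let st : V × V → ℕ := fun p => if h : ∃ k, 1 ≤ k ∧ k ≤ K ∧ p ∈ F k then Nat.find h else 0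
  have hst : ∀ p ∈ S, 1 ≤ st p ∧ st p ≤ K ∧ p ∈ F (st p) := by
    intro p hp
    obtain ⟨k, hk⟩ := hp
    have h : ∃ k, 1 ≤ k ∧ k ≤ K ∧ p ∈ F k := ⟨k, hk⟩
    simp only [st, dif_pos h]
    exact Nat.find_spec h
  have hst_min : ∀ p ∈ S, ∀ k', 1 ≤ k' → k' ≤ K → p ∈ F k' → st p ≤ k' := by
    intro p hp k' h1 h2 h3
    have h : ∃ k, 1 ≤ k ∧ k ≤ K ∧ p ∈ F k := ⟨k', h1, h2, h3⟩
    simp only [st, dif_pos h]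
    exact Nat.find_min' h ⟨h1, h2, h3⟩
  -- validity of each force at the expansion just before its first step
  have hvalid : ∀ p ∈ S, PSDValid G Set.univ (expand B F (st p - 1)) p.1 p.2 := by
    intro p hp
    obtain ⟨h1, h2, h3⟩ := hst p hp
    have := hC.forcesValid (st p - 1) (by omega) p.1 p.2
    rw [show st p - 1 + 1 = st p by omega] at this
    exact this h3
  -- target membership in expansions
  have htgt_expand : ∀ p ∈ S, ∀ m, st p ≤ m → p.2 ∈ expand B F m := by
    intro p hp m hm
    obtain ⟨h1, h2, h3⟩ := hst p hp
    rw [expand_eq]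
    exact Or.inr ⟨p.1, st p, h1, hm, h3⟩
  -- the ranking function
  let M := Fintype.card (V × V)
  have hM : 0 < M := Fintype.card_pos
  let e : V × V ≃ Fin M := Fintype.equivFin _
  let r : V × V → ℕ := fun p => st p * M + (e p).val
  have hrlt : ∀ p q, st p < st q → r p < r q := by
    intro p q h
    have h1 : st p * M + M ≤ st q * M := by
      calc st p * M + M = (st p + 1) * M := by ring
      _ ≤ st q * M := Nat.mul_le_mul_right M (by omega)
    have := (e p).isLt
    simp only [r]; omega
  have hrst : ∀ p q, r p ≤ r q → st p ≤ st q := by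
    intro p q h
    by_contra hc
    exact absurd (hrlt q p (by omega)) (by omega)
  have hrinj : Function.Injective r := by
    intro p q h
    have h1 : st p = st q := le_antisymm (hrst p q h.le) (hrst q p h.ge)
    have h2 : (e p).val = (e q).val := by simp only [r, h1] at h; omega
    exact e.injective (Fin.ext h2)
  -- the sorted enumeration
  let A : Finset ℕ := (S.toFinite.toFinset).image r
  set n := A.card with hn
  let iso := A.orderIsoOfFin rfl
  have hpick : ∀ a ∈ A, ∃ p ∈ S, r p = a := by
    intro a ha
    obtain ⟨p, hp, he⟩ := Finset.mem_image.mp ha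
    exact ⟨p, (Set.Finite.mem_toFinset _).mp hp, he⟩
  let t : ℕ → V × V := fun i =>
    if h : i < n then Classical.choose (hpick _ (iso ⟨i, h⟩).2) else Classical.arbitrary _
  have ht : ∀ i (h : i < n), t i ∈ S ∧ r (t i) = (iso ⟨i, h⟩ : ℕ) := by
    intro i h
    simp only [t, dif_pos h]
    exact Classical.choose_spec (hpick _ (iso ⟨i, h⟩).2)
  have horder : ∀ i j (hi : i < n) (hj : j < n), i < j → r (t i) < r (t j) := by
    intro i j hi hj hij
    rw [(ht i hi).2, (ht j hj).2]
    exact iso.strictMono (show (⟨i, hi⟩ : Fin n) < ⟨j, hj⟩ from hij)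
  have horder' : ∀ i j (hi : i < n) (hj : j < n), r (t i) < r (t j) → i < j := by
    intro i j hi hj h
    by_contra hc
    rcases Nat.lt_or_ge j i with h' | h'
    · exact absurd (horder j i hj hi h') (by omega)
    · have : i = j := by omega
      subst this; omega
  have hrange : ∀ p ∈ S, ∃ i, i < n ∧ t i = p := by
    intro p hp
    have ha : r p ∈ A := Finset.mem_image.mpr ⟨p, (Set.Finite.mem_toFinset _).mpr hp, rfl⟩
    set a : A := ⟨r p, ha⟩
    refine ⟨(iso.symm a).val, (iso.symm a).isLt, ?_⟩
    apply hrinj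
    rw [(ht _ (iso.symm a).isLt).2]
    have : iso (iso.symm a) = a := iso.apply_symm_apply a
    rw [show (⟨(iso.symm a).val, (iso.symm a).isLt⟩ : Fin n) = iso.symm a from rfl, this]
  have htinj : ∀ i j, i < n → j < n → t i = t j → i = j := by
    intro i j hi hj h
    by_contra hc
    rcases Nat.lt_or_ge i j with h' | h'
    · exact absurd (horder i j hi hj h') (by rw [h]; omega)
    · exact absurd (horder j i hj hi (by omega)) (by rw [h]; omega)
  -- target injectivity
  have hinj2 : ∀ i, i < n → ∀ j, j < n → (t i).2 = (t j).2 → i = j := by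
    intro i hi j hj he
    by_cases hpq : t i = t j
    · exact htinj i j hi hj hpq
    · exfalso
      have hti := (ht i hi).1
      have htj := (ht j hj).1
      -- wlog st (t i) ≤ st (t j)
      have key : ∀ p q, p ∈ S → q ∈ S → p.2 = q.2 → p ≠ q → False := by
        intro p q hp hq he2 hne
        rcases Nat.lt_or_ge (st p) (st q) with hlt | hge
        · have h1 : p.2 ∈ expand B F (st q - 1) :=
            htgt_expand p hp _ (by omega)
          rw [he2] at h1
          exact (hvalid q hq).2.2.2.1 h1
        · rcases Nat.lt_or_ge (st q) (st p) with hlt' | hge'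
          · have h1 : q.2 ∈ expand B F (st p - 1) :=
              htgt_expand q hq _ (by omega)
            rw [← he2] at h1
            exact (hvalid p hp).2.2.2.1 h1
          · have heq : st p = st q := by omega
            have h1 := (hst p hp).2.2
            have h2 := (hst q hq).2.2
            rw [heq] at h1
            have : p.1 = q.1 := by
              have hp2 : (p.1, p.2) ∈ F (st q) := by rw [← Prod.mk.eta (p := p)] at h1; exact h1
              have hq2 : (q.1, q.2) ∈ F (st q) := by rw [← Prod.mk.eta (p := q)] at h2; exact h2
              rw [he2] at hp2
              exact hC.uniqueForcer (st q) p.1 q.1 q.2 hp2 hq2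
            exact hne (Prod.ext this he2)
      exact key (t i) (t j) hti htj he hpq
  refine ⟨⟨n, t, ?_, hinj2, ?_, ?_⟩⟩
  · -- validity
    intro i hi
    have hti := (ht i hi).1
    have hv := hvalid (t i) hti
    refine PSDValid_mono hv ?_ ?_
    · -- expand (st p - 1) ⊆ D i
      intro x hx
      rw [expand_eq] at hx
      rcases hx with hx | ⟨u, k, h1, h2, h3⟩
      · exact Or.inl hx
      · have hq : (u, x) ∈ S := ⟨k, h1, by
          have := (hst (t i) hti).2.1; omega, h3⟩
        obtain ⟨j, hj, hje⟩ := hrange _ hq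
        have hstq : st (u, x) ≤ k := hst_min _ hq k h1 (by
          have := (hst (t i) hti).2.1; omega) h3
        have : r (u, x) < r (t i) := hrlt _ _ (by
          have h1' := (hst (t i) hti).1; omega)
        rw [← hje] at this
        have hji : j < i := horder' j i hj hi this
        refine Or.inr ⟨j, hji, ?_⟩
        rw [hje]
    · -- target not in D i
      rintro (hx | ⟨j, hj1, hj2⟩)
      · exact (hvalid (t i) hti).2.2.2.1 (subset_expand B F _ hx)
      · have hjn : j < n := by omega
        exact absurd (hinj2 j hjn i hi hj2) (by omega)
  · -- range_eq
    ext p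
    constructor
    · exact fun hp => hrange p hp
    · rintro ⟨i, hi, rfl⟩
      exact (ht i hi).1
  · -- cover
    intro x hx
    have : x ∈ expand B F K := hC.complete (by trivial)
    rw [expand_eq] at this
    rcases this with h | ⟨u, k, h1, h2, h3⟩
    · exact absurd h hx
    · obtain ⟨i, hi, hie⟩ := hrange (u, x) ⟨k, h1, h2, h3⟩
      exact ⟨i, hi, by rw [hie]⟩


section Core

variable {B₀ : Set V} {S : Set (V × V)}

/-- A force into the white component of `v`. -/
def Cmove (sd : SerialData G B₀ S) (v : V) (T s : ℕ) : Prop :=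
  s < sd.n ∧ s ≤ T ∧ whiteConn G Set.univ (sd.D s) v (sd.t s).2

/-- Targets of C-moves. -/
def WtSet (sd : SerialData G B₀ S) (v : V) (T : ℕ) : Set V :=
  {w | ∃ s, Cmove sd v T s ∧ (sd.t s).2 = w}

/-- Forcers of C-moves with index `< c`. -/
def Ulow (sd : SerialData G B₀ S) (v : V) (T c : ℕ) : Set V :=
  {u | ∃ j, j < c ∧ Cmove sd v T j ∧ (sd.t j).1 = u}

/-- Blue set just before the reversal of C-move `s`. -/
def NB (sd : SerialData G B₀ S) (v : V) (T s : ℕ) : Set V :=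
  (B₀ ∪ WtSet sd v T) \ Ulow sd v T (s + 1)

/-- Targets of non-C-moves with index `< c`. -/
def Wlow (sd : SerialData G B₀ S) (v : V) (T c : ℕ) : Set V :=
  {w | ∃ i, i < sd.n ∧ i < c ∧ ¬ Cmove sd v T i ∧ (sd.t i).2 = w}

/-- Blue set just before replaying non-C-move `i` in the second phase. -/
def PB (sd : SerialData G B₀ S) (v : V) (T i : ℕ) : Set V :=
  (B₀ ∪ WtSet sd v T) ∪ Wlow sd v T i

/-- The new PSD forcing set. -/
def Bnew (sd : SerialData G B₀ S) (v : V) (T : ℕ) : Set V :=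
  (B₀ ∪ WtSet sd v T) \ Ulow sd v T sd.n

variable (sd : SerialData G B₀ S) (v : V) (T : ℕ)

lemma Cmove.lt_n {sd' : SerialData G B₀ S} {v' : V} {T' s : ℕ}
    (h : Cmove sd' v' T' s) : s < sd'.n := h.1

lemma Cmove.conn {sd' : SerialData G B₀ S} {v' : V} {T' s : ℕ}
    (h : Cmove sd' v' T' s) :
    whiteConn G Set.univ (sd'.D s) v' (sd'.t s).2 := h.2.2

/-- No two C-moves share a forcer. -/
lemma cmove_forcer_inj {s s' : ℕ} (hs : Cmove sd v T s) (hs' : Cmove sd v T s')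
    (he : (sd.t s).1 = (sd.t s').1) : s = s' := by
  by_contra hne
  -- wlog s < s'
  have key : ∀ a b, Cmove sd v T a → Cmove sd v T b → (sd.t a).1 = (sd.t b).1 →
      a < b → False := by
    intro a b ha hb he hab
    -- target of b is white at D a, adjacent to forcer of a, connected to target of a via v
    have hwb : (sd.t b).2 ∉ sd.D a :=
      fun hmem => sd.tgt_not_mem_D hb.lt_n (sd.D_mono (by omega) hmem)
    have hconn : whiteConn G Set.univ (sd.D a) (sd.t a).2 (sd.t b).2 :=
      Relation.ReflTransGen.trans (whiteConn_symm ha.conn)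
        (whiteConn_mono (sd.D_mono (by omega)) hb.conn)
    have hadj : G.Adj (sd.t a).1 (sd.t b).2 := by rw [he]; exact sd.adj hb.lt_n
    have := (sd.validD ha.lt_n).2.2.2.2.2 (sd.t b).2 trivial hadj hwb hconn
    exact absurd (sd.inj2 b hb.lt_n a ha.lt_n this) (by omega)
  rcases Nat.lt_or_ge s s' with h | h
  · exact key s s' hs hs' he h
  · exact key s' s hs' hs he.symm (by omega)

/-- The forcer of a C-move is a root or the target of an earlier C-move. -/
lemma cmove_forcer_chain {s : ℕ} (hs : Cmove sd v T s) (hB : (sd.t s).1 ∉ B₀) :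
    ∃ j, Cmove sd v T j ∧ j < s ∧ (sd.t j).2 = (sd.t s).1 := by
  have hsn := hs.lt_n
  have hsT := hs.2.1
  rcases sd.src_mem_D hs.lt_n with h | ⟨j, hj, hje⟩
  · exact absurd h hB
  refine ⟨j, ⟨by omega, by omega, ?_⟩, hj, hje⟩
  -- white connection from v to target j via target s
  have hws : (sd.t s).2 ∉ sd.D j :=
    fun hmem => sd.tgt_not_mem_D hs.lt_n (sd.D_mono (by omega) hmem)
  have hwj : (sd.t j).2 ∉ sd.D j := sd.tgt_not_mem_D (by omega)
  have hadj : G.Adj (sd.t s).2 (sd.t j).2 := by rw [hje]; exact (sd.adj hs.lt_n).symm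
  exact (whiteConn_mono (sd.D_mono (by omega)) hs.conn).tail
    ⟨hadj, trivial, trivial, hws, hwj⟩

lemma tgt_mem_NB {s : ℕ} (hs : Cmove sd v T s) : (sd.t s).2 ∈ NB sd v T s := by
  constructor
  · exact Or.inr ⟨s, hs, rfl⟩
  · rintro ⟨j, hj, hcj, hje⟩
    have : (sd.t j).1 ∈ sd.D s := sd.D_mono (by omega) (sd.src_mem_D hcj.lt_n)
    rw [hje] at this
    exact sd.tgt_not_mem_D hs.lt_n this

lemma src_not_mem_NB {s : ℕ} (hs : Cmove sd v T s) : (sd.t s).1 ∉ NB sd v T s :=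
  fun h => h.2 ⟨s, by omega, hs, rfl⟩

/-- Kill a connection through the forcer of an earlier C-move. -/
lemma kill_earlier_forcer {s j : ℕ} (hj : Cmove sd v T j) (hjs : j < s)
    {z' : V} (hz' : z' ∉ sd.D s) (hadj : G.Adj (sd.t j).1 z')
    (hconn : whiteConn G Set.univ (sd.D s) v z') : False := by
  have hz'j : z' ∉ sd.D j := fun h => hz' (sd.D_mono (by omega) h)
  have hconnj : whiteConn G Set.univ (sd.D j) (sd.t j).2 z' :=
    Relation.ReflTransGen.trans (whiteConn_symm hj.conn)
      (whiteConn_mono (sd.D_mono (by omega)) hconn)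
  have := (sd.validD hj.lt_n).2.2.2.2.2 z' trivial hadj hz'j hconnj
  rw [this] at hz'
  exact hz' (sd.tgt_mem_D hjs)

/-- Kill a connection through the target of an earlier non-C-move. -/
lemma kill_earlier_nonC {s τ : ℕ} (hs : Cmove sd v T s) (hτs : τ < s) (hτn : τ < sd.n)
    (hnc : ¬ Cmove sd v T τ) {z' : V} (hz' : z' ∉ sd.D s)
    (hadj : G.Adj (sd.t τ).2 z') (hconn : whiteConn G Set.univ (sd.D s) v z') : False := by
  have hsT := hs.2.1
  refine hnc ⟨hτn, by omega, ?_⟩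
  have hz'τ : z' ∉ sd.D τ := fun h => hz' (sd.D_mono (by omega) h)
  exact (whiteConn_mono (sd.D_mono (by omega)) hconn).tail
    ⟨hadj.symm, trivial, trivial, hz'τ, sd.tgt_not_mem_D hτn⟩

/-- Kill any connection from an old-blue, new-white vertex (other than the current
forcer) to the white component of `v`. -/
lemma kill_blue_white {s : ℕ} (hs : Cmove sd v T s) {z : V}
    (hzNB : z ∉ NB sd v T s) (hzD : z ∈ sd.D s) (hzu : z ≠ (sd.t s).1)
    {z' : V} (hz' : z' ∉ sd.D s) (hadj : G.Adj z z')
    (hconn : whiteConn G Set.univ (sd.D s) v z') : False := by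
  have hUlow : z ∈ B₀ ∪ WtSet sd v T → z ∈ Ulow sd v T (s + 1) := by
    intro h
    by_contra hc
    exact hzNB ⟨h, hc⟩
  have hforcer : ∀ j, j < s + 1 → Cmove sd v T j → (sd.t j).1 = z → False := by
    intro j hj hcj hje
    have hjs : j < s := by
      rcases Nat.lt_or_ge j s with h | h
      · exact h
      · exfalso
        apply hzu
        rw [← hje]
        have hjs' : j = s := by omega
        rw [hjs']
    exact kill_earlier_forcer sd v T hcj hjs hz' (hje ▸ hadj) hconn
  rcases hzD with hzB | ⟨τ, hτs, hτe⟩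
  · obtain ⟨j, hj, hcj, hje⟩ := hUlow (Or.inl hzB)
    exact hforcer j hj hcj hje
  · by_cases hcτ : Cmove sd v T τ
    · obtain ⟨j, hj, hcj, hje⟩ := hUlow (Or.inr ⟨τ, hcτ, hτe⟩)
      exact hforcer j hj hcj hje
    · have hτn : τ < sd.n := by
        have := hs.lt_n; omega
      exact kill_earlier_nonC sd v T hs hτs hτn hcτ hz' (hτe ▸ hadj) hconn

/-- Walking in the new-white region from a vertex of the white component of `v`
can never reach the forcer of C-move `s`. -/
lemma walk_lemma {s : ℕ} (hs : Cmove sd v T s) :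
    ∀ z, whiteConn G Set.univ (NB sd v T s) z (sd.t s).1 →
      z ∉ sd.D s → whiteConn G Set.univ (sd.D s) v z → z ∉ NB sd v T s → False := by
  intro z hwalk
  induction hwalk using Relation.ReflTransGen.head_induction_on with
  | refl =>
    intro hz _ _
    exact hz (sd.src_mem_D hs.lt_n)
  | @head a c h' hrest ih =>
    intro haD hconn haNB
    obtain ⟨hadj, _, _, haNB', hcNB⟩ := h'
    by_cases hcD : c ∈ sd.D s
    · by_cases hcu : c = (sd.t s).1
      · -- a is an old-white neighbor of the forcer, in the component of v
        subst hcu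
        have hconnw : whiteConn G Set.univ (sd.D s) (sd.t s).2 a :=
          Relation.ReflTransGen.trans (whiteConn_symm hs.conn) hconn
        have := (sd.validD hs.lt_n).2.2.2.2.2 a trivial hadj.symm haD hconnw
        rw [this] at haNB
        exact haNB (tgt_mem_NB sd v T hs)
      · exact kill_blue_white sd v T hs hcNB hcD hcu haD hadj.symm hconn
    · exact ih hcD (hconn.tail ⟨hadj, trivial, trivial, haD, hcD⟩) hcNB

/-- The reversal of a C-move is a valid PSD force. -/
theorem reversal_valid {s : ℕ} (hs : Cmove sd v T s) :
    PSDValid G Set.univ (NB sd v T s) (sd.t s).2 (sd.t s).1 := by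
  refine ⟨trivial, trivial, tgt_mem_NB sd v T hs, src_not_mem_NB sd v T hs,
    (sd.adj hs.lt_n).symm, ?_⟩
  intro y _ hadjy hyNB hconn
  by_contra hne
  by_cases hyD : y ∈ sd.D s
  · exact kill_blue_white sd v T hs hyNB hyD hne
      (sd.tgt_not_mem_D hs.lt_n) hadjy.symm hs.conn
  · have hconnv : whiteConn G Set.univ (sd.D s) v y :=
      hs.conn.tail ⟨hadjy, trivial, trivial, sd.tgt_not_mem_D hs.lt_n, hyD⟩
    exact walk_lemma sd v T hs y (whiteConn_symm hconn) hyD hconnv hyNB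

/-- Replaying a non-C-move in the second phase is a valid PSD force. -/
theorem phase2_valid {i : ℕ} (hi : i < sd.n) (hnc : ¬ Cmove sd v T i) :
    PSDValid G Set.univ (PB sd v T i) (sd.t i).1 (sd.t i).2 := by
  refine PSDValid_mono (sd.validD hi) ?_ ?_
  · rintro x (hx | ⟨j, hj, hje⟩)
    · exact Or.inl (Or.inl hx)
    · by_cases hcj : Cmove sd v T j
      · exact Or.inl (Or.inr ⟨j, hcj, hje⟩)
      · have hjn : j < sd.n := by omega
        exact Or.inr ⟨j, hjn, hj, hcj, hje⟩
  · rintro ((hx | ⟨s', hs', he'⟩) | ⟨j, hj1, hj2, hj3, hj4⟩)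
    · exact sd.tgt_not_mem_B hi hx
    · exact hnc (sd.inj2 s' hs'.lt_n i hi he' ▸ hs')
    · exact absurd (sd.inj2 j hj1 i hi hj4) (by omega)


lemma src_mem_BWt {s : ℕ} (hs : Cmove sd v T s) :
    (sd.t s).1 ∈ B₀ ∪ WtSet sd v T := by
  by_cases hB : (sd.t s).1 ∈ B₀
  · exact Or.inl hB
  · obtain ⟨j, hcj, _, hje⟩ := cmove_forcer_chain sd v T hs hB
    exact Or.inr ⟨j, hcj, hje⟩

open Classical in
/-- The new chronology: reversed C-moves in mirrored order, then non-C-moves replayed. -/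
noncomputable def Fnew (sd : SerialData G B₀ S) (v : V) (T : ℕ) : ℕ → Set (V × V) :=
  fun m =>
    if 1 ≤ m ∧ m ≤ sd.n ∧ Cmove sd v T (sd.n - m) then
      {((sd.t (sd.n - m)).2, (sd.t (sd.n - m)).1)}
    else if sd.n < m ∧ m ≤ 2 * sd.n ∧ ¬ Cmove sd v T (m - sd.n - 1) then
      {sd.t (m - sd.n - 1)}
    else ∅

lemma Fnew_subsingleton (m : ℕ) : ∀ p ∈ Fnew sd v T m, ∀ q ∈ Fnew sd v T m, p = q := by
  intro p hp q hq
  unfold Fnew at hp hq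
  split_ifs at hp hq with h1 h2
  · rw [Set.mem_singleton_iff] at hp hq; rw [hp, hq]
  · rw [Set.mem_singleton_iff] at hp hq; rw [hp, hq]
  · exact absurd hp (Set.notMem_empty p)

lemma expand_Fnew_le : ∀ m, m ≤ sd.n →
    expand (Bnew sd v T) (Fnew sd v T) m = (B₀ ∪ WtSet sd v T) \ Ulow sd v T (sd.n - m) := by
  intro m
  induction m with
  | zero => intro _; simp only [expand, Bnew, Nat.sub_zero]
  | succ m ih =>
    intro hm
    have hms : m ≤ sd.n := by omega
    set s := sd.n - (m + 1) with hsdef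
    have hns : sd.n - m = s + 1 := by omega
    show expand (Bnew sd v T) (Fnew sd v T) m ∪ _ = _
    rw [ih hms, hns]
    by_cases hc : Cmove sd v T s
    · have hF : Fnew sd v T (m + 1) = {((sd.t s).2, (sd.t s).1)} := by
        unfold Fnew
        rw [if_pos ⟨by omega, by omega, by rw [← hsdef]; exact hc⟩]
      rw [hF]
      ext x
      simp only [Set.mem_union, Set.mem_diff, Set.mem_setOf_eq, Set.mem_singleton_iff,
        Prod.mk.injEq]
      constructor
      · rintro (⟨hx1, hx2⟩ | ⟨u, h1, h2⟩)
        · refine ⟨hx1, fun ⟨j, hj, hcj, hje⟩ => hx2 ⟨j, by omega, hcj, hje⟩⟩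
        · subst h2
          refine ⟨src_mem_BWt sd v T hc, ?_⟩
          rintro ⟨j, hj, hcj, hje⟩
          exact absurd (cmove_forcer_inj sd v T hcj hc hje) (by omega)
      · rintro ⟨hx1, hx2⟩
        by_cases hxu : x = (sd.t s).1
        · exact Or.inr ⟨(sd.t s).2, rfl, hxu⟩
        · refine Or.inl ⟨hx1, ?_⟩
          rintro ⟨j, hj, hcj, hje⟩
          rcases Nat.lt_or_ge j (s + 1) with h' | h'
          · rcases Nat.lt_or_ge j s with h'' | h''
            · exact hx2 ⟨j, h'', hcj, hje⟩
            · have : j = s := by omega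
              subst this
              exact hxu hje.symm
          · omega
    · have hF : Fnew sd v T (m + 1) = ∅ := by
        unfold Fnew
        rw [if_neg, if_neg]
        · rintro ⟨h1, h2, h3⟩; omega
        · rintro ⟨h1, h2, h3⟩
          exact hc (by rw [hsdef]; exact h3)
      rw [hF]
      have : Ulow sd v T (s + 1) = Ulow sd v T s := by
        ext x
        simp only [Ulow, Set.mem_setOf_eq]
        constructor
        · rintro ⟨j, hj, hcj, hje⟩
          rcases Nat.lt_or_ge j s with h' | h'
          · exact ⟨j, h', hcj, hje⟩
          · have : j = s := by omega
            subst this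
            exact absurd hcj hc
        · rintro ⟨j, hj, hcj, hje⟩
          exact ⟨j, by omega, hcj, hje⟩
      rw [this]
      simp

lemma Ulow_zero : Ulow sd v T 0 = ∅ := by
  ext x
  simp only [Ulow, Set.mem_setOf_eq, Set.mem_empty_iff_false, iff_false]
  rintro ⟨j, hj, _⟩
  omega

lemma expand_Fnew_ge : ∀ j, j ≤ sd.n →
    expand (Bnew sd v T) (Fnew sd v T) (sd.n + j) = (B₀ ∪ WtSet sd v T) ∪ Wlow sd v T j := by
  intro j
  induction j with
  | zero =>
    intro _
    rw [Nat.add_zero, expand_Fnew_le sd v T sd.n (le_refl _), Nat.sub_self, Ulow_zero]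
    have : Wlow sd v T 0 = ∅ := by
      ext x
      simp only [Wlow, Set.mem_setOf_eq, Set.mem_empty_iff_false, iff_false]
      rintro ⟨i, _, hi, _⟩
      omega
    rw [this]
    simp
  | succ j ih =>
    intro hj
    have hjn : j < sd.n := by omega
    have hexp : expand (Bnew sd v T) (Fnew sd v T) (sd.n + (j + 1)) =
        expand (Bnew sd v T) (Fnew sd v T) (sd.n + j) ∪
          {w | ∃ u, (u, w) ∈ Fnew sd v T (sd.n + j + 1)} := rfl
    rw [hexp, ih (by omega)]
    have hidx : sd.n + j + 1 - sd.n - 1 = j := by omega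
    by_cases hc : Cmove sd v T j
    · have hF : Fnew sd v T (sd.n + j + 1) = ∅ := by
        unfold Fnew
        have hA : ¬ (1 ≤ sd.n + j + 1 ∧ sd.n + j + 1 ≤ sd.n ∧
            Cmove sd v T (sd.n - (sd.n + j + 1))) := by rintro ⟨h1, h2, _⟩; omega
        have hB : ¬ (sd.n < sd.n + j + 1 ∧ sd.n + j + 1 ≤ 2 * sd.n ∧
            ¬ Cmove sd v T (sd.n + j + 1 - sd.n - 1)) := by
          rintro ⟨h1, h2, h3⟩
          rw [hidx] at h3
          exact h3 hc
        rw [if_neg hA, if_neg hB]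
      have hW : Wlow sd v T (j + 1) = Wlow sd v T j := by
        ext x
        simp only [Wlow, Set.mem_setOf_eq]
        constructor
        · rintro ⟨i, hi1, hi2, hi3, hi4⟩
          rcases Nat.lt_or_ge i j with h' | h'
          · exact ⟨i, hi1, h', hi3, hi4⟩
          · have : i = j := by omega
            subst this
            exact absurd hc hi3
        · rintro ⟨i, hi1, hi2, hi3, hi4⟩
          exact ⟨i, hi1, by omega, hi3, hi4⟩
      rw [hF, hW]
      simp
    · have hF : Fnew sd v T (sd.n + j + 1) = {sd.t j} := by
        unfold Fnew
        have hA : ¬ (1 ≤ sd.n + j + 1 ∧ sd.n + j + 1 ≤ sd.n ∧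
            Cmove sd v T (sd.n - (sd.n + j + 1))) := by rintro ⟨h1, h2, _⟩; omega
        have hB : sd.n < sd.n + j + 1 ∧ sd.n + j + 1 ≤ 2 * sd.n ∧
            ¬ Cmove sd v T (sd.n + j + 1 - sd.n - 1) := by
          refine ⟨by omega, by omega, ?_⟩
          rw [hidx]; exact hc
        rw [if_neg hA, if_pos hB, hidx]
      rw [hF]
      ext x
      simp only [Set.mem_union, Set.mem_setOf_eq, Wlow]
      constructor
      · rintro ((h | h) | ⟨u, hu⟩)
        · exact Or.inl h
        · rcases h with ⟨i, hi1, hi2, hi3, hi4⟩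
          exact Or.inr ⟨i, hi1, by omega, hi3, hi4⟩
        · rw [Set.mem_singleton_iff, Prod.ext_iff] at hu
          exact Or.inr ⟨j, hjn, by omega, hc, hu.2.symm⟩
      · rintro (h | ⟨i, hi1, hi2, hi3, hi4⟩)
        · exact Or.inl (Or.inl h)
        · rcases Nat.lt_or_ge i j with h' | h'
          · exact Or.inl (Or.inr ⟨i, hi1, h', hi3, hi4⟩)
          · have : i = j := by omega
            subst this
            refine Or.inr ⟨(sd.t i).1, ?_⟩
            rw [← hi4, Prod.mk.eta]
            rfl

/-- The forces of the new chronology. -/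
def Snew (sd : SerialData G B₀ S) (v : V) (T : ℕ) : Set (V × V) :=
  {p | ∃ s, Cmove sd v T s ∧ p = ((sd.t s).2, (sd.t s).1)} ∪
    {p | ∃ i, i < sd.n ∧ ¬ Cmove sd v T i ∧ p = sd.t i}

lemma forcesOf_Fnew : forcesOf (Fnew sd v T) (2 * sd.n) = Snew sd v T := by
  ext p
  constructor
  · rintro ⟨k, hk1, hk2, hp⟩
    unfold Fnew at hp
    split_ifs at hp with h1 h2
    · rw [Set.mem_singleton_iff] at hp
      exact Or.inl ⟨sd.n - k, h1.2.2, hp⟩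
    · rw [Set.mem_singleton_iff] at hp
      refine Or.inr ⟨k - sd.n - 1, by omega, h2.2.2, hp⟩
    · exact absurd hp (Set.notMem_empty p)
  · rintro (⟨s, hs, hp⟩ | ⟨i, hi, hnc, hp⟩)
    · have hsn := hs.lt_n
      refine ⟨sd.n - s, by omega, by omega, ?_⟩
      unfold Fnew
      rw [if_pos ⟨by omega, by omega, by rw [show sd.n - (sd.n - s) = s by omega]; exact hs⟩]
      rw [show sd.n - (sd.n - s) = s by omega]
      exact hp
    · refine ⟨sd.n + i + 1, by omega, by omega, ?_⟩
      unfold Fnew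
      rw [if_neg (by rintro ⟨h1, h2, _⟩; omega), if_pos]
      · rw [show sd.n + i + 1 - sd.n - 1 = i by omega]
        exact hp
      · exact ⟨by omega, by omega, by rw [show sd.n + i + 1 - sd.n - 1 = i by omega]; exact hnc⟩

/-- The new chronology is a valid relaxed chronology. -/
theorem relaxedChron_Fnew (hcov : ∀ x : V, x ∉ B₀ → ∃ i, i < sd.n ∧ (sd.t i).2 = x) :
    RelaxedChron (PSDValid G Set.univ) Set.univ (Bnew sd v T) (2 * sd.n) (Fnew sd v T) := by
  constructor
  · exact fun _ _ => trivial
  · unfold Fnew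
    rw [if_neg (by rintro ⟨h, _⟩; omega), if_neg (by rintro ⟨h, _⟩; omega)]
  · intro k hk
    unfold Fnew
    rw [if_neg (by rintro ⟨h1, h2, _⟩; omega), if_neg (by rintro ⟨h1, h2, _⟩; omega)]
  · intro k hk u w hp
    unfold Fnew at hp
    split_ifs at hp with h1 h2
    · rw [Set.mem_singleton_iff, Prod.mk.injEq] at hp
      set s := sd.n - (k + 1) with hsdef
      have hcs : Cmove sd v T s := h1.2.2
      have hexp : expand (Bnew sd v T) (Fnew sd v T) k = NB sd v T s := by
        rw [expand_Fnew_le sd v T k (by omega)]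
        unfold NB
        rw [show sd.n - k = s + 1 by omega]
      rw [hexp, hp.1, hp.2]
      exact reversal_valid sd v T hcs
    · rw [Set.mem_singleton_iff] at hp
      set i := k + 1 - sd.n - 1 with hidef
      have hin : i < sd.n := by omega
      have hexp : expand (Bnew sd v T) (Fnew sd v T) k = PB sd v T i := by
        rw [show k = sd.n + (k - sd.n) by omega, expand_Fnew_ge sd v T (k - sd.n) (by omega)]
        unfold PB
        rw [show k - sd.n = i by omega]
      rw [hexp, show u = (sd.t i).1 by rw [← hp], show w = (sd.t i).2 by rw [← hp]]
      exact phase2_valid sd v T hin h2.2.2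
    · exact absurd hp (Set.notMem_empty _)
  · intro k u1 u2 w h1 h2
    have := Fnew_subsingleton sd v T k _ h1 _ h2
    exact congrArg Prod.fst this
  · intro x _
    rw [show 2 * sd.n = sd.n + sd.n by omega, expand_Fnew_ge sd v T sd.n (le_refl _)]
    by_cases hB : x ∈ B₀
    · exact Or.inl (Or.inl hB)
    · obtain ⟨i, hi, hie⟩ := hcov x hB
      by_cases hc : Cmove sd v T i
      · exact Or.inl (Or.inr ⟨i, hc, hie⟩)
      · exact Or.inr ⟨i, hi, hi, hc, hie⟩


/-! ### Trees -/

/-- The reversed-path step relation: C-move edges. -/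
def Rstep (sd : SerialData G B₀ S) (v : V) (T : ℕ) (a c : V) : Prop :=
  ∃ s, Cmove sd v T s ∧ sd.t s = (a, c)

lemma mem_S_iff (sd' : SerialData G B₀ S) {p : V × V} :
    p ∈ S ↔ ∃ i, i < sd'.n ∧ sd'.t i = p :=
  Set.ext_iff.mp sd'.range_eq p

lemma in_edge_unique (sd' : SerialData G B₀ S) {a a' c : V}
    (h : (a, c) ∈ S) (h' : (a', c) ∈ S) : a = a' := by
  obtain ⟨i, hi, hie⟩ := (mem_S_iff sd').mp h
  obtain ⟨j, hj, hje⟩ := (mem_S_iff sd').mp h'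
  have : (sd'.t i).2 = (sd'.t j).2 := by rw [hie, hje]
  have hij := sd'.inj2 i hi j hj this
  subst hij
  rw [hie] at hje
  exact congrArg Prod.fst hje

lemma tgt_not_root (sd' : SerialData G B₀ S) {a c : V} (h : (a, c) ∈ S) : c ∉ B₀ := by
  obtain ⟨i, hi, hie⟩ := (mem_S_iff sd').mp h
  have := sd'.tgt_not_mem_B hi
  rw [hie] at this
  exact this

lemma Rstep_mem_S {a c : V} (h : Rstep sd v T a c) : (a, c) ∈ S := by
  obtain ⟨s, hs, hse⟩ := h
  exact (mem_S_iff sd).mpr ⟨s, hs.lt_n, hse⟩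

lemma Rstep_functional {a c c' : V} (h : Rstep sd v T a c) (h' : Rstep sd v T a c') :
    c = c' := by
  obtain ⟨s, hs, hse⟩ := h
  obtain ⟨s', hs', hse'⟩ := h'
  have : (sd.t s).1 = (sd.t s').1 := by rw [hse, hse']
  have heq := cmove_forcer_inj sd v T hs hs' this
  subst heq
  rw [hse] at hse'
  exact congrArg Prod.snd hse'

lemma rtg_flip {α : Type*} {r : α → α → Prop} {a b : α} (h : Relation.ReflTransGen r a b) :
    Relation.ReflTransGen (fun x y => r y x) b a := by
  induction h with
  | refl => exact Relation.ReflTransGen.refl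
  | tail h1 h2 ih => exact Relation.ReflTransGen.head h2 ih

lemma rtg_conf {α : Type*} {r : α → α → Prop}
    (hf : ∀ a b c, r a b → r a c → b = c) {a x y : α}
    (hx : Relation.ReflTransGen r a x) (hy : Relation.ReflTransGen r a y) :
    Relation.ReflTransGen r x y ∨ Relation.ReflTransGen r y x := by
  induction hx using Relation.ReflTransGen.head_induction_on generalizing y with
  | refl => exact Or.inl hy
  | @head a c h' hrest ih =>
    rcases Relation.ReflTransGen.cases_head hy with h | ⟨c', hc', hy'⟩
    · subst h
      exact Or.inr (Relation.ReflTransGen.head h' hrest)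
    · have : c' = c := hf _ _ _ hc' h'
      subst this
      exact ih hy'

/-- Uniqueness of the root of a forcing tree. -/
lemma root_unique (sd' : SerialData G B₀ S) {b z : V} (hb : b ∈ B₀)
    (hz : Relation.ReflTransGen (fun a c => (a, c) ∈ S) b z) :
    ∀ b', b' ∈ B₀ → Relation.ReflTransGen (fun a c => (a, c) ∈ S) b' z → b = b' := by
  induction hz with
  | refl =>
    intro b' hb' h
    rcases Relation.ReflTransGen.cases_tail h with h | ⟨q, _, hq⟩
    · exact h
    · exact absurd hb (tgt_not_root sd' hq)
  | tail h1 hedge ih =>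
    rename_i p z'
    intro b' hb' h
    rcases Relation.ReflTransGen.cases_tail h with h' | ⟨q, hq1, hq2⟩
    · subst h'
      exact absurd hb' (tgt_not_root sd' hedge)
    · have : q = p := in_edge_unique sd' hq2 hedge
      subst this
      exact ih b' hb' hq1

/-- A C-move's forcer has a strictly earlier index than any C-move it enables. -/
lemma cmove_index_lt {s s' : ℕ} (hs : Cmove sd v T s) (hs' : Cmove sd v T s')
    (h : (sd.t s').1 = (sd.t s).2) : s < s' := by
  have hsn := hs.lt_n
  have hs'n := hs'.lt_n
  rcases sd.src_mem_D hs'.lt_n with hB | ⟨j, hj, hje⟩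
  · rw [h] at hB
    exact absurd hB (sd.tgt_not_mem_B hs.lt_n)
  · rw [h] at hje
    have := sd.inj2 j (by omega) s hs.lt_n hje
    omega

/-- Every vertex has a maximal C-move chain end. -/
lemma path_end (a : V) :
    ∃ e, Relation.ReflTransGen (Rstep sd v T) a e ∧ ∀ c, ¬ Rstep sd v T e c := by
  suffices h : ∀ k a, (∀ s, Cmove sd v T s → (sd.t s).1 = a → sd.n ≤ s + k) →
      ∃ e, Relation.ReflTransGen (Rstep sd v T) a e ∧ ∀ c, ¬ Rstep sd v T e c by
    exact h sd.n a (fun s hs _ => by have := hs.lt_n; omega)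
  intro k
  induction k with
  | zero =>
    intro a ha
    refine ⟨a, Relation.ReflTransGen.refl, ?_⟩
    rintro c ⟨s, hs, hse⟩
    have := ha s hs (by rw [hse])
    have := hs.lt_n
    omega
  | succ k ih =>
    intro a ha
    by_cases hout : ∃ s, Cmove sd v T s ∧ (sd.t s).1 = a
    · obtain ⟨s, hs, hse⟩ := hout
      have hstep : Rstep sd v T a (sd.t s).2 := ⟨s, hs, by rw [← hse]⟩
      have hnext : ∀ s', Cmove sd v T s' → (sd.t s').1 = (sd.t s).2 → sd.n ≤ s' + k := by
        intro s' hs' he'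
        have := cmove_index_lt sd v T hs hs' he'
        have := ha s hs hse
        omega
      obtain ⟨e, he1, he2⟩ := ih (sd.t s).2 hnext
      exact ⟨e, Relation.ReflTransGen.head hstep he1, he2⟩
    · push_neg at hout
      refine ⟨a, Relation.ReflTransGen.refl, ?_⟩
      rintro c ⟨s, hs, hse⟩
      exact hout s hs (by rw [hse])

/-- Every C-move target is reachable from a root by a C-move chain. -/
lemma root_path : ∀ s, Cmove sd v T s →
    ∃ b, b ∈ B₀ ∧ Relation.ReflTransGen (Rstep sd v T) b (sd.t s).2 := by
  intro s
  induction s using Nat.strong_induction_on with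
  | _ s ih =>
    intro hs
    have hstep : Rstep sd v T (sd.t s).1 (sd.t s).2 := ⟨s, hs, rfl⟩
    by_cases hB : (sd.t s).1 ∈ B₀
    · exact ⟨(sd.t s).1, hB, Relation.ReflTransGen.single hstep⟩
    · obtain ⟨j, hcj, hjs, hje⟩ := cmove_forcer_chain sd v T hs hB
      obtain ⟨b, hb, hpath⟩ := ih j hjs hcj
      rw [hje] at hpath
      exact ⟨b, hb, hpath.tail hstep⟩

/-- Re-rooting a forcing tree along the reversed C-move chain. -/
lemma tree_eq {b e : V} (hb : b ∈ B₀)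
    (hpath : Relation.ReflTransGen (Rstep sd v T) b e)
    (hend : ∀ c, ¬ Rstep sd v T e c) :
    treeOf S b = treeOf (Snew sd v T) e := by
  have hSnew_rev : ∀ a c, Rstep sd v T a c → (c, a) ∈ Snew sd v T := by
    rintro a c ⟨s, hs, hse⟩
    exact Or.inl ⟨s, hs, by rw [hse]⟩
  have hb_new : b ∈ treeOf (Snew sd v T) e := by
    have := rtg_flip hpath
    exact Relation.ReflTransGen.mono (fun x y h => hSnew_rev y x h) _ _ this
  have he_old : e ∈ treeOf S b :=
    Relation.ReflTransGen.mono (fun x y h => Rstep_mem_S sd v T h) _ _ hpath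
  ext z
  constructor
  · intro hz
    induction hz with
    | refl => exact hb_new
    | tail h1 hedge ih =>
      rename_i p z'
      obtain ⟨i, hi, hie⟩ := (mem_S_iff sd).mp hedge
      by_cases hc : Cmove sd v T i
      · -- a C-move edge inside the tree of b lies on the reversed chain
        have hRz : Rstep sd v T p z' := ⟨i, hc, hie⟩
        have hrootp : ∃ b', b' ∈ B₀ ∧ Relation.ReflTransGen (Rstep sd v T) b' p := by
          by_cases hpB : p ∈ B₀
          · exact ⟨p, hpB, Relation.ReflTransGen.refl⟩
          · have hp1 : (sd.t i).1 = p := congrArg Prod.fst hie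
            obtain ⟨j, hcj, hji, hje⟩ := cmove_forcer_chain sd v T hc (hp1 ▸ hpB)
            obtain ⟨b', hb', hpath'⟩ := root_path sd v T j hcj
            rw [hje, hp1] at hpath'
            exact ⟨b', hb', hpath'⟩
        obtain ⟨b', hb', hpath'⟩ := hrootp
        have hbb' : b = b' := by
          refine root_unique sd hb (h1.tail hedge) b' hb' ?_
          exact (Relation.ReflTransGen.mono
            (fun x y h => Rstep_mem_S sd v T h) _ _ hpath').tail hedge
        subst hbb'
        have hcf : ∀ a b₁ c₁, Rstep sd v T a b₁ → Rstep sd v T a c₁ → b₁ = c₁ :=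
          fun _ _ _ h h' => Rstep_functional sd v T h h'
        rcases rtg_conf hcf hpath' hpath with hpe | hep
        · rcases Relation.ReflTransGen.cases_head hpe with h' | ⟨c', hc1, hc2⟩
          · subst h'
            exact absurd hRz (hend z')
          · have : c' = z' := Rstep_functional sd v T hc1 hRz
            subst this
            exact Relation.ReflTransGen.mono (fun x y h => hSnew_rev y x h) _ _ (rtg_flip hc2)
        · rcases Relation.ReflTransGen.cases_head hep with h' | ⟨c', hc1, hc2⟩
          · subst h'
            exact absurd hRz (hend z')
          · exact absurd hc1 (hend c')
      · exact ih.tail (Or.inr ⟨i, hi, hc, hie.symm⟩)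
  · intro hz
    induction hz with
    | refl => exact he_old
    | tail h1 hedge ih =>
      rename_i p z'
      rcases hedge with ⟨s, hs, hse⟩ | ⟨i, hi, hnc, hie⟩
      · -- reversed edge: z' is the in-neighbor of p in S
        have hzp : (z', p) ∈ S := by
          refine (mem_S_iff sd).mpr ⟨s, hs.lt_n, ?_⟩
          have h1' : (sd.t s).2 = p := (congrArg Prod.fst hse).symm
          have h2' : (sd.t s).1 = z' := (congrArg Prod.snd hse).symm
          rw [← h1', ← h2', Prod.mk.eta]
        rcases Relation.ReflTransGen.cases_tail ih with h' | ⟨q, hq1, hq2⟩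
        · subst h'
          exact absurd hb (tgt_not_root sd hzp)
        · have : q = z' := in_edge_unique sd hq2 hzp
          subst this
          exact hq1
      · exact ih.tail ((mem_S_iff sd).mpr ⟨i, hi, hie.symm⟩)


/-- The forcing trees of the new chronology are the forcing trees of the old one. -/
theorem image_eq :
    (fun b => treeOf (Snew sd v T) b) '' (Bnew sd v T) = (fun b => treeOf S b) '' B₀ := by
  ext X
  constructor
  · rintro ⟨b', ⟨hmem, hnotU⟩, rfl⟩
    have hend : ∀ c, ¬ Rstep sd v T b' c := by
      rintro c ⟨s, hs, hse⟩
      exact hnotU ⟨s, hs.lt_n, hs, congrArg Prod.fst hse⟩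
    have hroot : ∃ b, b ∈ B₀ ∧ Relation.ReflTransGen (Rstep sd v T) b b' := by
      rcases hmem with hB | ⟨s, hs, hse⟩
      · exact ⟨b', hB, Relation.ReflTransGen.refl⟩
      · obtain ⟨b, hb, hpath⟩ := root_path sd v T s hs
        rw [hse] at hpath
        exact ⟨b, hb, hpath⟩
    obtain ⟨b, hb, hpath⟩ := hroot
    exact ⟨b, hb, tree_eq sd v T hb hpath hend⟩
  · rintro ⟨b, hb, rfl⟩
    obtain ⟨e, hpath, hend⟩ := path_end sd v T b
    have hmem : e ∈ B₀ ∪ WtSet sd v T := by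
      rcases Relation.ReflTransGen.cases_tail hpath with h | ⟨q, hq1, hq2⟩
      · subst h; exact Or.inl hb
      · obtain ⟨s, hs, hse⟩ := hq2
        exact Or.inr ⟨s, hs, congrArg Prod.snd hse⟩
    have hnotU : e ∉ Ulow sd v T sd.n := by
      rintro ⟨j, hj, hcj, hje⟩
      refine hend (sd.t j).2 ⟨j, hcj, ?_⟩
      rw [← hje]
    exact ⟨e, ⟨hmem, hnotU⟩, (tree_eq sd v T hb hpath hend).symm⟩

/-- The new set has the same cardinality. -/
theorem ncard_Bnew : (Bnew sd v T).ncard = B₀.ncard := by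
  classical
  have hWt : WtSet sd v T = (fun s => (sd.t s).2) '' {s | Cmove sd v T s} := by
    ext w
    exact ⟨fun ⟨s, h1, h2⟩ => ⟨s, h1, h2⟩, fun ⟨s, h1, h2⟩ => ⟨s, h1, h2⟩⟩
  have hU : Ulow sd v T sd.n = (fun s => (sd.t s).1) '' {s | Cmove sd v T s} := by
    ext u
    simp only [Ulow, Set.mem_setOf_eq, Set.mem_image]
    constructor
    · rintro ⟨j, hj, hcj, hje⟩; exact ⟨j, hcj, hje⟩
    · rintro ⟨j, hcj, hje⟩; exact ⟨j, hcj.lt_n, hcj, hje⟩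
  have hWtcard : (WtSet sd v T).ncard = {s | Cmove sd v T s}.ncard := by
    rw [hWt]
    refine Set.ncard_image_of_injOn ?_
    intro i hi j hj he
    exact sd.inj2 i (Set.mem_setOf_eq ▸ hi).lt_n j (Set.mem_setOf_eq ▸ hj).lt_n he
  have hUcard : (Ulow sd v T sd.n).ncard = {s | Cmove sd v T s}.ncard := by
    rw [hU]
    refine Set.ncard_image_of_injOn ?_
    intro i hi j hj he
    exact cmove_forcer_inj sd v T hi hj he
  have hsub : Ulow sd v T sd.n ⊆ B₀ ∪ WtSet sd v T := by
    rintro u ⟨j, hj, hcj, hje⟩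
    rw [← hje]
    exact src_mem_BWt sd v T hcj
  have hdisj : Disjoint B₀ (WtSet sd v T) := by
    rw [Set.disjoint_left]
    rintro w hw ⟨s, hs, hse⟩
    rw [← hse] at hw
    exact sd.tgt_not_mem_B hs.lt_n hw
  have h1 : (Bnew sd v T).ncard = (B₀ ∪ WtSet sd v T).ncard - (Ulow sd v T sd.n).ncard :=
    Set.ncard_diff hsub (Set.toFinite _)
  have h2 : (B₀ ∪ WtSet sd v T).ncard = B₀.ncard + (WtSet sd v T).ncard :=
    Set.ncard_union_eq hdisj (Set.toFinite _) (Set.toFinite _)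
  rw [h1, h2, hWtcard, hUcard]
  omega

/-- `v` belongs to the new forcing set. -/
theorem v_mem_Bnew (hTn : T < sd.n) (hTv : (sd.t T).2 = v) : v ∈ Bnew sd v T := by
  have hcT : Cmove sd v T T := ⟨hTn, le_refl _, by rw [hTv]; exact Relation.ReflTransGen.refl⟩
  constructor
  · exact Or.inr ⟨T, hcT, hTv⟩
  · rintro ⟨j, hj, hcj, hje⟩
    have h1 : v ∈ sd.D j := by rw [← hje]; exact sd.src_mem_D hcj.lt_n
    have h2 : v ∈ sd.D T := sd.D_mono hcj.2.1 h1
    rw [← hTv] at h2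
    exact sd.tgt_not_mem_D hTn h2

end Core



/-- Main construction: trading `v` into a PSD forcing set while keeping the trees. -/
theorem main_construction {B₀ : Set V} {K₀ : ℕ} {F₀ : ℕ → Set (V × V)}
    (hF₀ : RelaxedChron (PSDValid G Set.univ) Set.univ B₀ K₀ F₀) (v : V) (hv : v ∉ B₀) :
    ∃ (B : Set V) (K : ℕ) (F : ℕ → Set (V × V)),
      B.ncard = B₀.ncard ∧ v ∈ B ∧
      RelaxedChron (PSDValid G Set.univ) Set.univ B K F ∧
      (fun b => treeOf (forcesOf F K) b) '' B
        = (fun b => treeOf (forcesOf F₀ K₀) b) '' B₀ := by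
  haveI : Nonempty V := ⟨v⟩
  obtain ⟨sd⟩ := exists_serialData hF₀
  obtain ⟨T, hTn, hTv⟩ := sd.cover v hv
  refine ⟨Bnew sd v T, 2 * sd.n, Fnew sd v T, ncard_Bnew sd v T, v_mem_Bnew sd v T hTn hTv,
    relaxedChron_Fnew sd v T sd.cover, ?_⟩
  rw [forcesOf_Fnew]
  exact image_eq sd v T

end ZF

/-- Given the PSD forcing trees `T` induced by some relaxed chronology of PSD forces for
a PSD forcing set of size `k`, for every vertex `v` there is a PSD forcing set `B` of size
`k` containing `v` and a relaxed chronology of PSD forces for `B` whose forcing trees are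
exactly `T`. -/
theorem trade_vertex_in_trees {V : Type*} [Fintype V] [DecidableEq V]
    (G : SimpleGraph V) (B₀ : Set V) (K₀ : ℕ) (F₀ : ℕ → Set (V × V)) (k : ℕ)
    (hcard : B₀.ncard = k)
    (hB₀ : ZF.IsForcingSet (ZF.PSDValid G Set.univ) Set.univ B₀)
    (hF₀ : ZF.RelaxedChron (ZF.PSDValid G Set.univ) Set.univ B₀ K₀ F₀)
    (v : V) :
    ∃ (B : Set V) (K : ℕ) (F : ℕ → Set (V × V)),
      B.ncard = k ∧ v ∈ B ∧
      ZF.IsForcingSet (ZF.PSDValid G Set.univ) Set.univ B ∧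
      ZF.RelaxedChron (ZF.PSDValid G Set.univ) Set.univ B K F ∧
      (fun b => ZF.treeOf (ZF.forcesOf F K) b) '' B
        = (fun b => ZF.treeOf (ZF.forcesOf F₀ K₀) b) '' B₀ := by
  by_cases hv : v ∈ B₀
  · exact ⟨B₀, K₀, F₀, hcard, hv, hB₀, hF₀, rfl⟩
  · obtain ⟨B, K, F, h1, h2, h3, h4⟩ := ZF.main_construction hF₀ v hv
    exact ⟨B, K, F, by rw [h1, hcard], h2, ZF.isForcingSet_of_relaxedChron h3, h3, h4⟩
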